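/- (Degree evaluation formula) Let 0 < q < 1, w ≥ 1, m ∈ ℕ, and for i = 1,…,w let n_i ∈ ℕ with m ≤ n_i and x_i ∈ [0,1]. Then ( ∏_{i=1}^{w} [x_i]_q )^m = ∏_{i=1}^{w} ( [1−x_i]_q + [x_i]_q )^{−(n_i−m)} · Σ_{k₁=m}^{n₁} Σ_{k₂=m}^{n₂} ⋯ Σ_{k_w=m}^{n_w} ∏_{i=1}^{w} ( C(k_i,m)/C(n_i,m) ) · B_{k₁,…,k_w; n₁,…,n_w}(x₁,…,x_w; q). -/

import Mathlib

open Finset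

/-- The `q`-number `[x]_q = (1 - q^x)/(1 - q)` (real exponent). -/
noncomputable def qnum (q x : ℝ) : ℝ := (1 - q ^ x) / (1 - q)

/-- The modified `q`-Bernstein polynomial
`B_{k,n}(x;q) = C(n,k) [x]_q^k [1-x]_q^(n-k)`. -/
noncomputable def qBern (q : ℝ) (k n : ℕ) (x : ℝ) : ℝ :=
  (n.choose k : ℝ) * qnum q x ^ k * qnum q (1 - x) ^ (n - k)

/-- The key single-variable summation identity. -/
lemma qBern_single_sum (a b : ℝ) (m n : ℕ) (h : m ≤ n) :
    ∑ k ∈ Finset.Icc m n, ((k.choose m : ℝ) / (n.choose m : ℝ)) *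
      ((n.choose k : ℝ) * a ^ k * b ^ (n - k)) = a ^ m * (a + b) ^ (n - m) := by
  have hC : ((n.choose m : ℝ)) ≠ 0 := Nat.cast_ne_zero.mpr (Nat.choose_pos h).ne'
  have key : ∀ k ∈ Finset.Icc m n,
      ((k.choose m : ℝ) / (n.choose m : ℝ)) * ((n.choose k : ℝ) * a ^ k * b ^ (n - k))
      = ((n - m).choose (k - m) : ℝ) * a ^ k * b ^ (n - k) := by
    intro k hk
    rw [Finset.mem_Icc] at hk
    have := Nat.choose_mul (n := n) hk.1
    have hc : (n.choose k : ℝ) * (k.choose m : ℝ)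
        = (n.choose m : ℝ) * ((n - m).choose (k - m) : ℝ) := by
      exact_mod_cast congrArg Nat.cast this
    have h2 : ((k.choose m : ℝ) / (n.choose m : ℝ)) * (n.choose k : ℝ)
        = ((n - m).choose (k - m) : ℝ) := by
      rw [div_mul_eq_mul_div, mul_comm, hc, mul_comm ((n.choose m : ℝ)) _, mul_div_assoc,
        div_self hC, mul_one]
    calc ((k.choose m : ℝ) / (n.choose m : ℝ)) * ((n.choose k : ℝ) * a ^ k * b ^ (n - k))
        = (((k.choose m : ℝ) / (n.choose m : ℝ)) * (n.choose k : ℝ)) * a ^ k * b ^ (n - k) := by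
          ring
      _ = ((n - m).choose (k - m) : ℝ) * a ^ k * b ^ (n - k) := by rw [h2]
  rw [Finset.sum_congr rfl key]
  rw [add_pow]
  rw [Finset.mul_sum]
  rw [← Finset.Ico_add_one_right_eq_Icc, Finset.sum_Ico_eq_sum_range]
  rw [Nat.sub_add_comm h]
  apply Finset.sum_congr rfl
  intro j hj
  rw [Finset.mem_range, Nat.lt_add_one_iff] at hj
  rw [Nat.add_sub_cancel_left, show n - (m + j) = n - m - j by omega, pow_add]
  ring

/-- Degree evaluation formula: `(∏ᵢ [xᵢ]_q)^m` as a linear combination of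
modified `q`-Bernstein polynomials of several variables. -/
theorem modified_qBernstein_degree_evaluation
    (q : ℝ) (hq0 : 0 < q) (hq1 : q < 1)
    (w : ℕ) (hw : 1 ≤ w) (m : ℕ) (n : Fin w → ℕ) (hn : ∀ i, m ≤ n i)
    (x : Fin w → ℝ) (hx : ∀ i, x i ∈ Set.Icc (0 : ℝ) 1) :
    (∏ i, qnum q (x i)) ^ m =
      (∏ i, (qnum q (1 - x i) + qnum q (x i)) ^ (-((n i : ℤ) - (m : ℤ)))) *
        ∑ k ∈ Finset.Icc (fun _ => m : Fin w → ℕ) n,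
          ∏ i, (((k i).choose m : ℝ) / ((n i).choose m : ℝ)) *
            qBern q (k i) (n i) (x i) := by
  have h1q : (0 : ℝ) < 1 - q := by linarith
  -- positivity of the sum [1-x]+[x]
  have hab : ∀ i, 0 < qnum q (1 - x i) + qnum q (x i) := by
    intro i
    obtain ⟨h0, h1⟩ := hx i
    have ha : 0 ≤ qnum q (x i) :=
      div_nonneg (by
        have := Real.rpow_le_one hq0.le hq1.le h0
        linarith) h1q.le
    have hb : 0 ≤ qnum q (1 - x i) :=
      div_nonneg (by
        have := Real.rpow_le_one hq0.le hq1.le (by linarith : (0:ℝ) ≤ 1 - x i)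
        linarith) h1q.le
    rcases eq_or_lt_of_le h0 with h | h
    · have : qnum q (1 - x i) = 1 := by
        rw [qnum, ← h, sub_zero, Real.rpow_one, div_self h1q.ne']
      linarith
    · have : q ^ (x i) < 1 := Real.rpow_lt_one hq0.le hq1 h
      have : 0 < qnum q (x i) := div_pos (by linarith) h1q
      linarith
  -- factor the multivariate sum into a product of single-variable sums
  have hsum :
      (∑ k ∈ Finset.Icc (fun _ => m : Fin w → ℕ) n,
          ∏ i, (((k i).choose m : ℝ) / ((n i).choose m : ℝ)) *
            qBern q (k i) (n i) (x i))
      = ∏ i, ∑ k ∈ Finset.Icc m (n i),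
          ((k.choose m : ℝ) / ((n i).choose m : ℝ)) * qBern q k (n i) (x i) := by
    rw [Pi.Icc_eq]
    exact (Finset.prod_univ_sum (fun i => Finset.Icc m (n i))
      (fun i k => ((k.choose m : ℝ) / ((n i).choose m : ℝ)) * qBern q k (n i) (x i))).symm
  rw [hsum]
  have hinner : ∀ i, (∑ k ∈ Finset.Icc m (n i),
      ((k.choose m : ℝ) / ((n i).choose m : ℝ)) * qBern q k (n i) (x i))
      = qnum q (x i) ^ m * (qnum q (x i) + qnum q (1 - x i)) ^ (n i - m) := by
    intro i
    rw [← qBern_single_sum (qnum q (x i)) (qnum q (1 - x i)) m (n i) (hn i)]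
    apply Finset.sum_congr rfl
    intro k _
    rw [qBern]
  rw [Finset.prod_congr rfl fun i _ => hinner i]
  rw [← Finset.prod_mul_distrib]
  have hterm : ∀ i, (qnum q (1 - x i) + qnum q (x i)) ^ (-((n i : ℤ) - (m : ℤ))) *
      (qnum q (x i) ^ m * (qnum q (x i) + qnum q (1 - x i)) ^ (n i - m))
      = qnum q (x i) ^ m := by
    intro i
    have hs : qnum q (1 - x i) + qnum q (x i) ≠ 0 := (hab i).ne'
    have he : -((n i : ℤ) - (m : ℤ)) = -((n i - m : ℕ) : ℤ) := by
      have := hn i; omega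
    rw [he, add_comm (qnum q (x i)), zpow_neg, zpow_natCast]
    rw [mul_comm (qnum q (x i) ^ m), ← mul_assoc, inv_mul_cancel₀ (pow_ne_zero _ hs), one_mul]
  rw [Finset.prod_congr rfl fun i _ => hterm i, Finset.prod_pow]
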